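/- Let M be a compact Riemannian manifold, a ∈ C^∞(M;ℝ), τ ∈ ℂ with |Re τ| ≤ |Im τ|/2 and |Im τ| ≥ 4‖a‖_{L^∞}. Then for all u ∈ C^∞(M), (1/4)|Im τ|²·‖u‖_{L²(M)} ≤ ‖(−Δ_g + 2ia τ − τ²)u‖_{L²(M)}. -/

import Mathlib

open MeasureTheory

/-- `L²` estimate in the region `|Re τ| ≤ |Im τ|/2`, `|Im τ| ≥ 4‖a‖_∞`:
`(1/4)|Im τ|² ‖u‖_{L²} ≤ ‖(−Δ + 2iaτ − τ²)u‖_{L²}`. The compact manifold is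
modeled by a finite measure space; the symmetry and nonnegativity of `−Δ`
(integration by parts) are hypotheses. -/
theorem damped_wave_L2_estimate_large_Im {M : Type*} [MeasurableSpace M] [Nonempty M]
    (μ : Measure M) [IsFiniteMeasure μ]
    (a : M → ℝ) (hbdA : BddAbove (Set.range fun x => |a x|))
    (Δ : (M → ℂ) →ₗ[ℂ] (M → ℂ)) (τ : ℂ)
    (hτ : |τ.re| ≤ |τ.im| / 2) (hτ' : 4 * (⨆ x, |a x|) ≤ |τ.im|)
    (u f : M → ℂ)
    (hf : ∀ x, f x = -(Δ u x) + 2 * Complex.I * (a x) * τ * u x - τ ^ 2 * u x)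
    (hu2 : MemLp u 2 μ) (hf2 : MemLp f 2 μ)
    (hint1 : Integrable (fun x => Δ u x * (starRingEnd ℂ) (u x)) μ)
    (hint2 : Integrable (fun x => a x * ‖u x‖ ^ 2) μ)
    (hsym : (∫ x, -(Δ u x) * (starRingEnd ℂ) (u x) ∂μ).im = 0)
    (hpos : 0 ≤ (∫ x, -(Δ u x) * (starRingEnd ℂ) (u x) ∂μ).re) :
    ENNReal.ofReal (τ.im ^ 2 / 4) * eLpNorm u 2 μ ≤ eLpNorm f 2 μ := by
  classical
  obtain ⟨x₀⟩ := ‹Nonempty M›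
  set C := ⨆ x, |a x| with hC
  have hCa : ∀ x, |a x| ≤ C := fun x => le_ciSup hbdA x
  have hC0 : 0 ≤ C := le_trans (abs_nonneg _) (hCa x₀)
  -- integrability of squares of norms
  have hu2' : Integrable (fun x => ‖u x‖ ^ 2) μ := by
    have := hu2.integrable_norm_rpow two_ne_zero ENNReal.ofNat_ne_top
    simpa [ENNReal.toReal_ofNat, (show ((2:ENNReal)).toReal = ((2:ℕ):ℝ) by norm_num),
      Real.rpow_natCast] using this
  have hf2' : Integrable (fun x => ‖f x‖ ^ 2) μ := by
    have := hf2.integrable_norm_rpow two_ne_zero ENNReal.ofNat_ne_top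
    simpa [(show ((2:ENNReal)).toReal = ((2:ℕ):ℝ) by norm_num),
      Real.rpow_natCast] using this
  set NU := ∫ x, ‖u x‖ ^ 2 ∂μ with hNUdef
  set NF := ∫ x, ‖f x‖ ^ 2 ∂μ with hNFdef
  set A := ∫ x, a x * ‖u x‖ ^ 2 ∂μ with hAdef
  set D := ∫ x, -(Δ u x) * (starRingEnd ℂ) (u x) ∂μ with hDdef
  have hNU0 : 0 ≤ NU := integral_nonneg fun x => by positivity
  have hNF0 : 0 ≤ NF := integral_nonneg fun x => by positivity
  -- bound on the damping integral
  have hAbd : |A| ≤ C * NU := by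
    have h1 : |A| ≤ ∫ x, |a x * ‖u x‖ ^ 2| ∂μ := by
      simpa only [Real.norm_eq_abs] using norm_integral_le_integral_norm
        (fun x => a x * ‖u x‖ ^ 2) (μ := μ)
    have h2 : ∫ x, |a x * ‖u x‖ ^ 2| ∂μ ≤ ∫ x, C * ‖u x‖ ^ 2 ∂μ := by
      refine integral_mono hint2.abs (hu2'.const_mul C) fun x => ?_
      rw [abs_mul, abs_of_nonneg (by positivity : (0:ℝ) ≤ ‖u x‖ ^ 2)]
      exact mul_le_mul_of_nonneg_right (hCa x) (by positivity)
    calc |A| ≤ ∫ x, |a x * ‖u x‖ ^ 2| ∂μ := h1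
      _ ≤ ∫ x, C * ‖u x‖ ^ 2 ∂μ := h2
      _ = C * NU := integral_const_mul _ _
  -- pointwise identity
  have hmc : ∀ z : ℂ, z * (starRingEnd ℂ) z = ((‖z‖ ^ 2 : ℝ) : ℂ) := fun z => by
    rw [Complex.mul_conj, Complex.normSq_eq_norm_sq]
  have hpt : ∀ x, f x * (starRingEnd ℂ) (u x)
      = -(Δ u x) * (starRingEnd ℂ) (u x)
        + (2 * Complex.I * τ) * ((a x * ‖u x‖ ^ 2 : ℝ) : ℂ)
        - τ ^ 2 * ((‖u x‖ ^ 2 : ℝ) : ℂ) := by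
    intro x
    have h := hmc (u x)
    rw [hf x]
    push_cast at h ⊢
    rw [← h]
    ring
  -- integral identity
  have hi1 : Integrable (fun x => -(Δ u x) * (starRingEnd ℂ) (u x)) μ := by
    simpa only [neg_mul, Pi.neg_def] using hint1.neg
  have hi2 : Integrable (fun x => (2 * Complex.I * τ) * ((a x * ‖u x‖ ^ 2 : ℝ) : ℂ)) μ :=
    hint2.ofReal.const_mul _
  have hi3 : Integrable (fun x => τ ^ 2 * ((‖u x‖ ^ 2 : ℝ) : ℂ)) μ :=
    hu2'.ofReal.const_mul _
  have hZ : ∫ x, f x * (starRingEnd ℂ) (u x) ∂μ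
      = D + 2 * Complex.I * τ * (A : ℂ) - τ ^ 2 * (NU : ℂ) := by
    have hi12 : Integrable (fun x => -(Δ u x) * (starRingEnd ℂ) (u x)
        + (2 * Complex.I * τ) * ((a x * ‖u x‖ ^ 2 : ℝ) : ℂ)) μ := hi1.add hi2
    have hIA : ∫ x, ((a x * ‖u x‖ ^ 2 : ℝ) : ℂ) ∂μ = ((A : ℝ) : ℂ) :=
      integral_ofReal (𝕜 := ℂ)
    have hINU : ∫ x, ((‖u x‖ ^ 2 : ℝ) : ℂ) ∂μ = ((NU : ℝ) : ℂ) :=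
      integral_ofReal (𝕜 := ℂ)
    rw [integral_congr_ae (Filter.Eventually.of_forall hpt), integral_sub hi12 hi3,
      integral_add hi1 hi2, integral_const_mul, integral_const_mul, hIA, hINU]
  set Z := ∫ x, f x * (starRingEnd ℂ) (u x) ∂μ with hZdef
  -- Cauchy–Schwarz
  have hCS : ‖Z‖ ≤ Real.sqrt NF * Real.sqrt NU := by
    have hconj : ∀ x, ‖f x * (starRingEnd ℂ) (u x)‖ = ‖f x‖ * ‖u x‖ := fun x => by
      rw [norm_mul, RCLike.norm_conj]
    have hpq : Real.HolderConjugate 2 2 := Real.HolderConjugate.two_two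
    have h2 : (ENNReal.ofReal (2:ℝ)) = 2 := by norm_num
    have hHolder := integral_mul_norm_le_Lp_mul_Lq (μ := μ) hpq
      (h2 ▸ hf2) (h2 ▸ hu2)
    calc ‖Z‖ ≤ ∫ x, ‖f x * (starRingEnd ℂ) (u x)‖ ∂μ :=
          norm_integral_le_integral_norm _
      _ = ∫ x, ‖f x‖ * ‖u x‖ ∂μ := by simp_rw [hconj]
      _ ≤ (∫ x, ‖f x‖ ^ (2:ℝ) ∂μ) ^ (1/(2:ℝ)) * (∫ x, ‖u x‖ ^ (2:ℝ) ∂μ) ^ (1/(2:ℝ)) := hHolder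
      _ = Real.sqrt NF * Real.sqrt NU := by
          rw [Real.sqrt_eq_rpow, Real.sqrt_eq_rpow, hNFdef, hNUdef]
          norm_num [(show (2:ℝ) = ((2:ℕ):ℝ) by norm_num), Real.rpow_natCast]
  have hZre : Z.re ≤ Real.sqrt NF * Real.sqrt NU :=
    le_trans (Complex.re_le_norm Z) hCS
  -- real part of the identity
  have hre : Z.re = D.re - 2 * τ.im * A + (τ.im ^ 2 - τ.re ^ 2) * NU := by
    have := congrArg Complex.re hZ
    simp only [Complex.add_re, Complex.sub_re, Complex.mul_re, Complex.mul_im,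
      Complex.I_re, Complex.I_im, Complex.ofReal_re, Complex.ofReal_im,
      Complex.re_ofNat, Complex.im_ofNat, pow_two] at this ⊢
    rw [this]; ring
  -- arithmetic bounds
  have hτre : τ.re ^ 2 ≤ τ.im ^ 2 / 4 := by
    nlinarith [sq_abs τ.re, sq_abs τ.im, abs_nonneg τ.re, abs_nonneg τ.im]
  have hτA : 2 * τ.im * A ≤ τ.im ^ 2 / 2 * NU := by
    have h1 : |2 * τ.im * A| ≤ 2 * |τ.im| * (C * NU) := by
      rw [abs_mul]
      have h2' : |2 * τ.im| = 2 * |τ.im| := by rw [abs_mul]; norm_num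
      rw [h2']
      exact mul_le_mul_of_nonneg_left hAbd (by positivity)
    have h2 : 2 * |τ.im| * (C * NU) ≤ τ.im ^ 2 / 2 * NU := by
      nlinarith [sq_abs τ.im, abs_nonneg τ.im, hC0, hNU0,
        mul_le_mul_of_nonneg_right (mul_le_mul_of_nonneg_left hτ' (abs_nonneg τ.im)) hNU0]
    exact (abs_le.mp (h1.trans h2)).2
  have key : τ.im ^ 2 / 4 * NU ≤ Real.sqrt NF * Real.sqrt NU := by
    nlinarith [mul_le_mul_of_nonneg_right hτre hNU0, hre, hZre, hτA, hpos]
  -- divide by √NU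
  have hgoal : τ.im ^ 2 / 4 * Real.sqrt NU ≤ Real.sqrt NF := by
    rcases eq_or_lt_of_le (Real.sqrt_nonneg NU) with h0 | h0
    · rw [← h0, mul_zero]; exact Real.sqrt_nonneg NF
    · have hNUs : Real.sqrt NU * Real.sqrt NU = NU := Real.mul_self_sqrt hNU0
      refine le_of_mul_le_mul_right ?_ h0
      calc τ.im ^ 2 / 4 * Real.sqrt NU * Real.sqrt NU = τ.im ^ 2 / 4 * NU := by
            rw [mul_assoc, hNUs]
        _ ≤ Real.sqrt NF * Real.sqrt NU := key
  -- conclude in ENNReal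
  rw [hu2.eLpNorm_eq_integral_rpow_norm two_ne_zero ENNReal.ofNat_ne_top,
    hf2.eLpNorm_eq_integral_rpow_norm two_ne_zero ENNReal.ofNat_ne_top,
    ← ENNReal.ofReal_mul (by positivity)]
  apply ENNReal.ofReal_le_ofReal
  have hexp : ((2:ENNReal)).toReal = ((2:ℕ):ℝ) := by norm_num
  simp only [hexp, Real.rpow_natCast]
  rw [(show (((2:ℕ):ℝ))⁻¹ = 1/(2:ℝ) by norm_num), ← Real.sqrt_eq_rpow, ← Real.sqrt_eq_rpow]
  exact hgoal
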